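/- Let n ≥ 1 and let x_1, …, x_n ∈ (0,∞) with empirical distribution function 𝔽(r) := (1/n)·#{i : x_i ≤ r}. Let 𝒦 denote the set of all functions h : [0,∞) → ℝ that are convex on [0,∞) and Lebesgue integrable over [0,∞). Suppose f̂ ∈ 𝒦 is square-integrable and minimizes Φ(h) := ∫_0^∞ h(x)² dx − (2/n)·∑_{i=1}^n h(x_i) over all square-integrable h ∈ 𝒦, and that there are points 0 = t_0 < t_1 < … < t_m with t_m > max_i x_i such that f̂ is affine on each interval [t_{k−1}, t_k], f̂ = 0 on [t_m, ∞), and at each t_k (1 ≤ k ≤ m) the right derivative of f̂ is strictly larger than the left derivative. Let F̂(r) := ∫_0^r f̂(x) dx. Then for every k ∈ {1, …, m} and every r ∈ [t_{k−1}, t_k), ∫_r^{t_k} 𝔽(x) dx ≥ ∫_r^{t_k} F̂(x) dx. -/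

import Mathlib

open MeasureTheory Set Topology Filter

set_option maxHeartbeats 1600000

/-- Perturbing a convex function by subtracting a small multiple of `(c - ·)⁺`
preserves convexity provided there is enough of a kink gap at `c`. -/
lemma aux_convex_kink (f : ℝ → ℝ) (hf : ConvexOn ℝ (Ici 0) f) (c η : ℝ) (hη : 0 ≤ η)
    (hslope : ∀ y z : ℝ, 0 ≤ y → y < c → c < z →
      (f c - f y) / (c - y) + η ≤ (f z - f c) / (z - c)) :
    ConvexOn ℝ (Ici 0) (fun v => f v - η * max (c - v) 0) := by
  apply convexOn_of_slope_mono_adjacent (convex_Ici 0)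
  intro x y z hx hz hxy hyz
  simp only [mem_Ici] at hx hz
  have hy0 : 0 < y - x := by linarith
  have hz0 : 0 < z - y := by linarith
  have hy : (0:ℝ) ≤ y := le_trans hx hxy.le
  rcases le_or_gt z c with hzc | hcz
  · have h1 : max (c - x) 0 = c - x := max_eq_left (by linarith)
    have h2 : max (c - y) 0 = c - y := max_eq_left (by linarith)
    have h3 : max (c - z) 0 = c - z := max_eq_left (by linarith)
    have := hf.slope_mono_adjacent (mem_Ici.2 hx) (mem_Ici.2 hz) hxy hyz
    rw [h1, h2, h3]
    rw [div_le_div_iff₀ hy0 hz0] at this ⊢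
    nlinarith
  · rcases le_or_gt c x with hcx | hxc
    · have h1 : max (c - x) 0 = 0 := max_eq_right (by linarith)
      have h2 : max (c - y) 0 = 0 := max_eq_right (by linarith)
      have h3 : max (c - z) 0 = 0 := max_eq_right (by linarith)
      have := hf.slope_mono_adjacent (mem_Ici.2 hx) (mem_Ici.2 hz) hxy hyz
      rw [h1, h2, h3]
      simpa using this
    · rcases le_or_gt y c with hyc | hcy
      · have h1 : max (c - x) 0 = c - x := max_eq_left (by linarith)
        have h2 : max (c - y) 0 = c - y := max_eq_left (by linarith)
        have h3 : max (c - z) 0 = 0 := max_eq_right (by linarith)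
        rw [h1, h2, h3]
        rcases eq_or_lt_of_le hyc with rfl | hyc'
        · have := hslope x z hx hxc hcz
          rw [div_le_div_iff₀ hy0 hz0]
          rw [div_add' _ _ _ (ne_of_gt hy0), div_le_div_iff₀ hy0 hz0] at this
          nlinarith
        · have hA := hslope y z hy hyc' hcz
          have hB := hf.slope_mono_adjacent (mem_Ici.2 hx) (mem_Ici.2 (le_trans hy hyc))
            hxy hyc'
          have hcy0 : (0:ℝ) < c - y := by linarith
          have hzc0 : (0:ℝ) < z - c := by linarith
          obtain ⟨s1, hs1⟩ : ∃ s1, (f c - f y) / (c - y) = s1 := ⟨_, rfl⟩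
          obtain ⟨s2, hs2⟩ : ∃ s2, (f z - f c) / (z - c) = s2 := ⟨_, rfl⟩
          rw [hs1, hs2] at hA
          rw [hs1] at hB
          have e1 : f c - f y = s1 * (c - y) := by
            rw [← hs1]; exact (div_mul_cancel₀ _ (ne_of_gt hcy0)).symm
          have e2 : f z - f c = s2 * (z - c) := by
            rw [← hs2]; exact (div_mul_cancel₀ _ (ne_of_gt hzc0)).symm
          rw [div_le_div_iff₀ hy0 hz0]
          have hBle : (f y - f x + η * (y - x)) / (y - x) ≤ s1 + η := by
            rw [div_le_iff₀ hy0]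
            have : (f y - f x) / (y - x) ≤ s1 := hB
            rw [div_le_iff₀ hy0] at this
            nlinarith
          rw [div_le_iff₀ hy0] at hBle
          have key : (s1 + η) * (z - y) ≤ f z - f y + η * (c - y) := by
            have : f z - f y = s2 * (z - c) + s1 * (c - y) := by linarith
            nlinarith
          nlinarith [mul_le_mul_of_nonneg_right hBle hz0.le,
            mul_le_mul_of_nonneg_right key hy0.le]
      · have h1 : max (c - x) 0 = c - x := max_eq_left (by linarith)
        have h2 : max (c - y) 0 = 0 := max_eq_right (by linarith)
        have h3 : max (c - z) 0 = 0 := max_eq_right (by linarith)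
        rw [h1, h2, h3]
        have hA := hslope x y hx hxc hcy
        have hB := hf.slope_mono_adjacent (mem_Ici.2 (le_trans hx hxc.le)) (mem_Ici.2 hz) hcy hyz
        have hcx0 : (0:ℝ) < c - x := by linarith
        have hyc0 : (0:ℝ) < y - c := by linarith
        obtain ⟨s1, hs1⟩ : ∃ s1, (f c - f x) / (c - x) = s1 := ⟨_, rfl⟩
        obtain ⟨s2, hs2⟩ : ∃ s2, (f y - f c) / (y - c) = s2 := ⟨_, rfl⟩
        rw [hs1, hs2] at hA
        rw [hs2] at hB
        have e1 : f c - f x = s1 * (c - x) := by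
          rw [← hs1]; exact (div_mul_cancel₀ _ (ne_of_gt hcx0)).symm
        have e2 : f y - f c = s2 * (y - c) := by
          rw [← hs2]; exact (div_mul_cancel₀ _ (ne_of_gt hyc0)).symm
        have hA' : s1 + η ≤ s2 := hA
        have hB' : s2 ≤ (f z - f y) / (z - y) := hB
        rw [div_le_div_iff₀ hy0 hz0]
        have hnum : f y - f x = s1 * (c - x) + s2 * (y - c) := by linarith
        have hkey : (f y - f x + η * (c - x)) ≤ s2 * (y - x) := by
          nlinarith [mul_le_mul_of_nonneg_right hA' hcx0.le]
        rw [le_div_iff₀ hz0] at hB'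
        nlinarith [mul_le_mul_of_nonneg_right hkey hz0.le,
          mul_le_mul_of_nonneg_right hB' hy0.le]

/-- Backward integral inequality for the least squares estimator:
`∫_r^{t_k} 𝔽 ≥ ∫_r^{t_k} F̂` for all `r ∈ [t_{k-1}, t_k)`, where `F̂(u) = ∫_0^u f̂`. -/
theorem lse_backward_integral_inequality
    (n : ℕ) (hn : 1 ≤ n) (x : Fin n → ℝ) (hx : ∀ i, 0 < x i)
    (EDF : ℝ → ℝ)
    (hEDF : ∀ r : ℝ, EDF r = (n : ℝ)⁻¹ * (Finset.univ.filter fun i => x i ≤ r).card)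
    (fhat : ℝ → ℝ)
    (hfconv : ConvexOn ℝ (Ici 0) fhat) (hfint : IntegrableOn fhat (Ici 0))
    (hfsq : IntegrableOn (fun y => fhat y ^ 2) (Ici 0))
    (hopt : ∀ h : ℝ → ℝ, ConvexOn ℝ (Ici 0) h → IntegrableOn h (Ici 0) →
      IntegrableOn (fun y => h y ^ 2) (Ici 0) →
      (∫ y in Ici (0 : ℝ), fhat y ^ 2) - (2 / n) * ∑ i, fhat (x i) ≤
        (∫ y in Ici (0 : ℝ), h y ^ 2) - (2 / n) * ∑ i, h (x i))
    (m : ℕ) (t : ℕ → ℝ)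
    (ht0 : t 0 = 0) (htlt : ∀ k, k < m → t k < t (k + 1))
    (htmax : ∀ i, x i < t m)
    (haff : ∀ k, 1 ≤ k → k ≤ m → ∃ α β : ℝ,
      ∀ y ∈ Icc (t (k - 1)) (t k), fhat y = α * y + β)
    (htail : ∀ y, t m ≤ y → fhat y = 0)
    (hkink : ∀ k, 1 ≤ k → k ≤ m →
      derivWithin fhat (Iic (t k)) (t k) < derivWithin fhat (Ici (t k)) (t k)) :
    ∀ k, 1 ≤ k → k ≤ m → ∀ r ∈ Ico (t (k - 1)) (t k),
      ∫ u in r..(t k), (∫ v in (0 : ℝ)..u, fhat v) ≤ ∫ u in r..(t k), EDF u := by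
  intro k hk1 hkm r hr
  obtain ⟨htk1r, hrtk⟩ := hr
  -- ====== knot ordering facts ======
  have tmono : ∀ b, b ≤ m → ∀ a, a < b → t a < t b := by
    intro b
    induction b with
    | zero => intro _ a ha; omega
    | succ b ih =>
      intro hbm a ha
      rcases Nat.lt_succ_iff_lt_or_eq.mp ha with h | h
      · exact lt_trans (ih (by omega) a h) (htlt b (by omega))
      · subst h; exact htlt a (by omega)
  have ht0le : ∀ a, a ≤ m → 0 ≤ t a := by
    intro a ham
    rcases Nat.eq_zero_or_pos a with rfl | h
    · exact le_of_eq ht0.symm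
    · exact le_of_lt (ht0 ▸ tmono a ham 0 h)
  have hm1 : 1 ≤ m := hk1.trans hkm
  have htkpos : 0 < t k := ht0 ▸ tmono k hkm 0 (by omega)
  have htktm : t k ≤ t m := by
    rcases eq_or_lt_of_le hkm with rfl | h
    · exact le_rfl
    · exact (tmono m le_rfl k h).le
  have hr0 : 0 ≤ r := le_trans (ht0le (k-1) (by omega)) htk1r
  have h0tm : 0 < t m := ht0 ▸ tmono m le_rfl 0 (by omega)
  have hrtm : r < t m := lt_of_lt_of_le hrtk htktm
  have hnR : (0:ℝ) < (n:ℝ) := by exact_mod_cast hn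
  have ht1pos : 0 < t 1 := ht0 ▸ tmono 1 hm1 0 (by omega)
  -- ====== continuity of fhat on [0,∞) and its truncation ======
  have hfcontOn : ContinuousOn fhat (Ici 0) := by
    intro u hu
    rcases eq_or_lt_of_le (mem_Ici.mp hu) with h | h
    · obtain ⟨α, β, hab⟩ := haff 1 le_rfl hm1
      have hmem : Icc (t 0) (t 1) ∈ 𝓝[Ici (0:ℝ)] u := by
        rw [mem_nhdsWithin]
        refine ⟨Iio (t 1), isOpen_Iio, by rw [← h]; exact ht1pos, ?_⟩
        rintro v ⟨hv1, hv2⟩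
        exact ⟨ht0 ▸ hv2, le_of_lt hv1⟩
      have heq : fhat =ᶠ[𝓝[Ici (0:ℝ)] u] fun y => α * y + β := by
        filter_upwards [hmem] with v hv using by simpa using hab v hv
      have hc : ContinuousWithinAt (fun y : ℝ => α * y + β) (Ici 0) u :=
        ((continuous_const.mul continuous_id).add continuous_const).continuousWithinAt
      exact (hc.congr_of_eventuallyEq heq (by
        simpa using hab u ⟨by simp [ht0, ← h], by rw [← h]; exact ht1pos.le⟩)).mono (by simp)
    · have : ContinuousAt fhat u := by
        have h1 := hfconv.continuousOn_interior
        rw [interior_Ici] at h1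
        exact h1.continuousAt (isOpen_Ioi.mem_nhds h)
      exact this.continuousWithinAt
  have hf0cont : Continuous (fun v : ℝ => fhat (max v 0)) := by
    refine hfcontOn.comp_continuous (continuous_id.max continuous_const) fun v => ?_
    exact le_max_right v 0
  set f0 : ℝ → ℝ := fun v => fhat (max v 0) with hf0def
  have hf0eq : ∀ v, 0 ≤ v → f0 v = fhat v := fun v hv => by
    simp only [hf0def, max_eq_left hv]
  -- ====== slope bounds at knots ======
  have hflip : ∀ a b u v : ℝ, u ≠ v → (a - b) / (u - v) = (b - a) / (v - u) := by
    intro a b u v huv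
    rw [div_eq_div_iff (sub_ne_zero.2 huv) (sub_ne_zero.2 (Ne.symm huv))]; ring
  have slopeL : ∀ j, 1 ≤ j → j ≤ m → ∀ y, 0 ≤ y → y < t j →
      (fhat (t j) - fhat y) / (t j - y) ≤ derivWithin fhat (Iic (t j)) (t j) := by
    intro j hj1 hjm y hy0 hytj
    obtain ⟨α, β, hab⟩ := haff j hj1 hjm
    have hj1j : t (j-1) < t j := tmono j hjm (j-1) (by omega)
    have hdw : derivWithin fhat (Iic (t j)) (t j) = α := by
      have hmem : Icc (t (j-1)) (t j) ∈ 𝓝[Iic (t j)] (t j) := by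
        rw [mem_nhdsWithin]
        exact ⟨Ioi (t (j-1)), isOpen_Ioi, hj1j, fun v ⟨hv1, hv2⟩ => ⟨le_of_lt hv1, hv2⟩⟩
      have heq : fhat =ᶠ[𝓝[Iic (t j)] (t j)] fun y => α * y + β := by
        filter_upwards [hmem] with v hv using hab v hv
      rw [heq.derivWithin_eq (hab _ ⟨hj1j.le, le_rfl⟩)]
      have hda : HasDerivAt (fun y : ℝ => α * y + β) α (t j) := by
        simpa using ((hasDerivAt_id (t j)).const_mul α).add_const β
      exact hda.hasDerivWithinAt.derivWithin (uniqueDiffOn_Iic _ _ (mem_Iic.2 le_rfl))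
    rw [hdw]
    rcases le_or_gt (t (j-1)) y with h | h
    · rw [hab y ⟨h, hytj.le⟩, hab (t j) ⟨hj1j.le, le_rfl⟩,
        div_le_iff₀ (sub_pos.2 hytj)]
      exact le_of_eq (by ring)
    · have hsec := hfconv.secant_mono (mem_Ici.2 (ht0le j hjm)) (mem_Ici.2 hy0)
        (mem_Ici.2 (ht0le (j-1) (by omega))) (ne_of_lt hytj) (ne_of_lt hj1j) h.le
      have hrhs : (fhat (t (j-1)) - fhat (t j)) / (t (j-1) - t j) = α := by
        rw [hab (t (j-1)) ⟨le_rfl, hj1j.le⟩, hab (t j) ⟨hj1j.le, le_rfl⟩,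
          div_eq_iff (sub_ne_zero.2 (ne_of_lt hj1j))]
        ring
      calc (fhat (t j) - fhat y) / (t j - y)
          = (fhat y - fhat (t j)) / (y - t j) := hflip _ _ _ _ (ne_of_gt hytj)
        _ ≤ (fhat (t (j-1)) - fhat (t j)) / (t (j-1) - t j) := hsec
        _ = α := hrhs
  have slopeR : ∀ j, 1 ≤ j → j ≤ m → ∀ z, t j < z →
      derivWithin fhat (Ici (t j)) (t j) ≤ (fhat z - fhat (t j)) / (z - t j) := by
    intro j hj1 hjm z hz
    rcases eq_or_lt_of_le hjm with rfl | hjm'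
    · have hdw : derivWithin fhat (Ici (t j)) (t j) = 0 := by
        have heq : fhat =ᶠ[𝓝[Ici (t j)] (t j)] fun _ => (0:ℝ) := by
          filter_upwards [self_mem_nhdsWithin] with v hv using htail v hv
        rw [heq.derivWithin_eq (htail _ le_rfl)]
        exact (hasDerivAt_const _ _).hasDerivWithinAt.derivWithin
          (uniqueDiffOn_Ici _ _ (mem_Ici.2 le_rfl))
      rw [hdw, htail z hz.le, htail (t j) le_rfl]
      simp
    · obtain ⟨α, β, hab⟩ := haff (j+1) (by omega) (by omega)
      simp only [Nat.add_sub_cancel] at hab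
      have hjj1 : t j < t (j+1) := htlt j hjm'
      have hdw : derivWithin fhat (Ici (t j)) (t j) = α := by
        have hmem : Icc (t j) (t (j+1)) ∈ 𝓝[Ici (t j)] (t j) := by
          rw [mem_nhdsWithin]
          exact ⟨Iio (t (j+1)), isOpen_Iio, hjj1, fun v ⟨hv1, hv2⟩ => ⟨hv2, le_of_lt hv1⟩⟩
        have heq : fhat =ᶠ[𝓝[Ici (t j)] (t j)] fun y => α * y + β := by
          filter_upwards [hmem] with v hv using hab v hv
        rw [heq.derivWithin_eq (hab _ ⟨le_rfl, hjj1.le⟩)]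
        have hda : HasDerivAt (fun y : ℝ => α * y + β) α (t j) := by
          simpa using ((hasDerivAt_id (t j)).const_mul α).add_const β
        exact hda.hasDerivWithinAt.derivWithin (uniqueDiffOn_Ici _ _ (mem_Ici.2 le_rfl))
      rw [hdw]
      rcases le_or_gt z (t (j+1)) with h | h
      · rw [hab z ⟨hz.le, h⟩, hab (t j) ⟨le_rfl, hjj1.le⟩,
          le_div_iff₀ (sub_pos.2 hz)]
        exact le_of_eq (by ring)
      · have hsec := hfconv.secant_mono (mem_Ici.2 (ht0le j hjm))
          (mem_Ici.2 (ht0le (j+1) (by omega)))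
          (mem_Ici.2 (le_trans (ht0le j hjm) (le_of_lt (lt_trans hjj1 h))))
          (ne_of_gt hjj1) (ne_of_gt (lt_trans hjj1 h)) (le_of_lt h)
        have hlhs : (fhat (t (j+1)) - fhat (t j)) / (t (j+1) - t j) = α := by
          rw [hab (t (j+1)) ⟨hjj1.le, le_rfl⟩, hab (t j) ⟨le_rfl, hjj1.le⟩,
            div_eq_iff (ne_of_gt (sub_pos.2 hjj1))]
          ring
        rw [← hlhs]
        exact hsec
  -- combined kink-slope bound
  have hkslope : ∀ j, 1 ≤ j → j ≤ m → ∀ ε : ℝ, 0 < ε →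
      ε < derivWithin fhat (Ici (t j)) (t j) - derivWithin fhat (Iic (t j)) (t j) →
      ∀ y z : ℝ, 0 ≤ y → y < t j → t j < z →
        (fhat (t j) - fhat y) / (t j - y) + ε ≤ (fhat z - fhat (t j)) / (z - t j) := by
    intro j hj1 hjm ε hε hεgap y z hy0 hyj hjz
    have h1 := slopeL j hj1 hjm y hy0 hyj
    have h2 := slopeR j hj1 hjm z hjz
    linarith
  have hgapk : 0 < derivWithin fhat (Ici (t k)) (t k) - derivWithin fhat (Iic (t k)) (t k) :=
    sub_pos.2 (hkink k hk1 hkm)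
  have hgapm : 0 < derivWithin fhat (Ici (t m)) (t m) - derivWithin fhat (Iic (t m)) (t m) :=
    sub_pos.2 (hkink m hm1 le_rfl)
  -- ====== integrability machine ======
  have bddφ : ∀ φ : ℝ → ℝ, Continuous φ → (∀ v, t m ≤ v → φ v = 0) →
      ∃ C : ℝ, ∀ v ∈ Ici (0:ℝ), ‖φ v‖ ≤ C := by
    intro φ hφc hφ0
    obtain ⟨C, hC⟩ := (isCompact_Icc (a := (0:ℝ)) (b := t m)).exists_bound_of_continuousOn
      hφc.continuousOn
    refine ⟨max C 0, fun v hv => ?_⟩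
    rcases le_or_gt v (t m) with h | h
    · exact le_trans (hC v ⟨mem_Ici.mp hv, h⟩) (le_max_left _ _)
    · rw [hφ0 v h.le]; simpa using le_max_right C 0
  have intφ0 : ∀ φ : ℝ → ℝ, Continuous φ → (∀ v, t m ≤ v → φ v = 0) →
      IntegrableOn φ (Ici 0) := by
    intro φ hφc hφ0
    have i1 : IntegrableOn φ (Icc 0 (t m)) := hφc.integrableOn_Icc
    have i2 : IntegrableOn φ (Ici (t m)) := by
      refine (integrableOn_congr_fun (fun v hv => (hφ0 v hv).symm) measurableSet_Ici).mp ?_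
      exact integrableOn_zero
    exact (i1.union i2).mono_set (fun v hv => by
      rcases le_or_gt v (t m) with h | h
      · exact Or.inl ⟨mem_Ici.mp hv, h⟩
      · exact Or.inr h.le)
  have intmul : ∀ (g φ : ℝ → ℝ), IntegrableOn g (Ici 0) → Continuous φ →
      (∀ v, t m ≤ v → φ v = 0) → IntegrableOn (fun y => g y * φ y) (Ici 0) := by
    intro g φ hg hφc hφ0
    obtain ⟨C, hC⟩ := bddφ φ hφc hφ0
    have h1 : IntegrableOn (fun y => φ y * g y) (Ici 0) := by
      refine Integrable.bdd_mul (c := C) hg (hφc.aestronglyMeasurable.restrict) ?_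
      exact (ae_restrict_iff' measurableSet_Ici).2 (Filter.Eventually.of_forall hC)
    exact h1.congr_fun (fun y _ => mul_comm _ _) measurableSet_Ici
  -- ====== perturbation inequality machine ======
  have key : ∀ (φ : ℝ → ℝ) (ε₀ : ℝ), 0 < ε₀ → Continuous φ →
      (∀ v, t m ≤ v → φ v = 0) →
      (∀ ε : ℝ, 0 < ε → ε < ε₀ → ConvexOn ℝ (Ici 0) (fun v => fhat v + ε * φ v)) →
      (n:ℝ)⁻¹ * ∑ i, φ (x i) ≤ ∫ y in Ici (0:ℝ), fhat y * φ y := by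
    intro φ ε₀ hε₀ hφc hφ0 hconv
    have iφ : IntegrableOn φ (Ici 0) := intφ0 φ hφc hφ0
    have ifφ : IntegrableOn (fun y => fhat y * φ y) (Ici 0) := intmul _ _ hfint hφc hφ0
    have iφsq : IntegrableOn (fun y => φ y ^ 2) (Ici 0) := by
      have hsq : (fun y : ℝ => φ y ^ 2) = fun y => φ y * φ y := by funext y; ring
      rw [hsq]
      exact intmul _ _ iφ hφc hφ0
    set I : ℝ := ∫ y in Ici (0:ℝ), fhat y * φ y with hI
    set Q : ℝ := ∫ y in Ici (0:ℝ), φ y ^ 2 with hQ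
    set S : ℝ := ∑ i, φ (x i) with hS
    have step : ∀ ε : ℝ, 0 < ε → ε < ε₀ → (n:ℝ)⁻¹ * S - I ≤ ε * (Q / 2) := by
      intro ε hε hεε
      have hconvh := hconv ε hε hεε
      have ih : IntegrableOn (fun v => fhat v + ε * φ v) (Ici 0) :=
        hfint.add (iφ.const_mul ε)
      have hexp : (fun y => (fhat y + ε * φ y) ^ 2)
          = fun y => fhat y ^ 2 + (2 * ε * (fhat y * φ y) + ε ^ 2 * φ y ^ 2) := by
        funext y; ring
      have ihsq : IntegrableOn (fun y => (fhat y + ε * φ y) ^ 2) (Ici 0) := by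
        rw [hexp]
        exact hfsq.add ((ifφ.const_mul _).add (iφsq.const_mul _))
      have hineq := hopt _ hconvh ih ihsq
      have hsq_int : (∫ y in Ici (0:ℝ), (fhat y + ε * φ y) ^ 2)
          = (∫ y in Ici (0:ℝ), fhat y ^ 2) + (2 * ε * I + ε ^ 2 * Q) := by
        have i2 : Integrable (fun y => 2 * ε * (fhat y * φ y) + ε ^ 2 * φ y ^ 2)
            (volume.restrict (Ici 0)) := (ifφ.const_mul _).add (iφsq.const_mul _)
        rw [hexp, integral_add hfsq i2,
          integral_add (ifφ.const_mul (2 * ε)) (iφsq.const_mul (ε ^ 2)),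
          integral_const_mul, integral_const_mul]
      have hsum : (∑ i, (fhat (x i) + ε * φ (x i))) = (∑ i, fhat (x i)) + ε * S := by
        rw [Finset.sum_add_distrib, Finset.mul_sum]
      rw [hsq_int, hsum] at hineq
      have hbase : 0 ≤ (2 * ε) * I + ε ^ 2 * Q - (2 / (n:ℝ)) * (ε * S) := by linarith
      have hrw : (2 / (n:ℝ)) * (ε * S) = 2 * ε * ((n:ℝ)⁻¹ * S) := by
        field_simp
      rw [hrw] at hbase
      have h2ε : (0:ℝ) < 2 * ε := by linarith
      have := le_of_mul_le_mul_left (show 2 * ε * ((n:ℝ)⁻¹ * S - I) ≤ 2 * ε * (ε * (Q/2)) by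
        nlinarith) h2ε
      linarith
    by_contra hcon
    push_neg at hcon
    set L : ℝ := (n:ℝ)⁻¹ * S - I with hL
    have hLpos : 0 < L := by simp only [hL]; linarith
    set ε : ℝ := min (ε₀ / 2) (L / (|Q| + 1)) with hε
    have hQ1 : (0:ℝ) < |Q| + 1 := by positivity
    have hεpos : 0 < ε := lt_min (by linarith) (div_pos hLpos hQ1)
    have hεlt : ε < ε₀ := lt_of_le_of_lt (min_le_left _ _) (by linarith)
    have h1 := step ε hεpos hεlt
    have h2 : ε * (|Q| + 1) ≤ L := by
      have := min_le_right (ε₀ / 2) (L / (|Q| + 1))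
      calc ε * (|Q| + 1) ≤ (L / (|Q| + 1)) * (|Q| + 1) :=
            mul_le_mul_of_nonneg_right this hQ1.le
        _ = L := div_mul_cancel₀ _ (ne_of_gt hQ1)
    have h3 : Q / 2 < |Q| + 1 := by linarith [le_abs_self Q, abs_nonneg Q]
    have h4 : ε * (Q / 2) < ε * (|Q| + 1) := mul_lt_mul_of_pos_left h3 hεpos
    exact absurd ((h1.trans_lt h4).trans_le h2) (lt_irrefl L)
  -- ====== the perturbation functions ======
  have hφcont : ∀ c : ℝ, Continuous (fun v : ℝ => min (t m - c) (max (t m - v) 0)) :=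
    fun c => continuous_const.min ((continuous_const.sub continuous_id).max continuous_const)
  have hφzero : ∀ c : ℝ, c ≤ t m → ∀ v, t m ≤ v →
      min (t m - c) (max (t m - v) 0) = 0 := by
    intro c hc v hv
    rw [max_eq_right (by linarith), min_eq_right (by linarith)]
  have hφdecomp : ∀ c : ℝ, c ≤ t m → ∀ v : ℝ,
      min (t m - c) (max (t m - v) 0) = max (t m - v) 0 - max (c - v) 0 := by
    intro c hctm v
    rcases le_total v c with h1 | h1
    · rw [max_eq_left (by linarith : (0:ℝ) ≤ t m - v), max_eq_left (by linarith),
        min_eq_left (by linarith)]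
      ring
    · rcases le_total v (t m) with h2 | h2
      · rw [max_eq_left (by linarith), max_eq_right (by linarith),
          min_eq_right (by linarith)]
        ring
      · rw [max_eq_right (by linarith), max_eq_right (by linarith),
          min_eq_right (by linarith)]
        ring
  have haffconv : ∀ a : ℝ, ConvexOn ℝ (Ici 0) (fun v : ℝ => max (a - v) 0) := by
    intro a
    have h1 : ConvexOn ℝ (Ici (0:ℝ)) (fun v : ℝ => a - v) :=
      ⟨convex_Ici 0, fun x _ y _ p q hp hq hpq => by
        simp only [smul_eq_mul]
        exact le_of_eq (by linear_combination (-a) * hpq)⟩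
    exact h1.sup (convexOn_const (0:ℝ) (convex_Ici 0))
  -- convexity of the two perturbation families
  have conv2 : ∀ ε : ℝ, 0 < ε →
      ε < derivWithin fhat (Ici (t k)) (t k) - derivWithin fhat (Iic (t k)) (t k) →
      ConvexOn ℝ (Ici 0) (fun v => fhat v + ε * min (t m - t k) (max (t m - v) 0)) := by
    intro ε hε hεgap
    have h1 := aux_convex_kink fhat hfconv (t k) ε hε.le
      (hkslope k hk1 hkm ε hε hεgap)
    have h2 := (haffconv (t m)).smul hε.le
    have heq : (fun v => fhat v + ε * min (t m - t k) (max (t m - v) 0))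
        = fun v => (fhat v - ε * max (t k - v) 0) + ε * max (t m - v) 0 := by
      funext v
      rw [hφdecomp (t k) htktm v]
      ring
    rw [heq]
    exact h1.add (by simpa [smul_eq_mul] using h2)
  have conv1 : ∀ ε : ℝ, 0 < ε →
      ε < derivWithin fhat (Ici (t m)) (t m) - derivWithin fhat (Iic (t m)) (t m) →
      ConvexOn ℝ (Ici 0) (fun v => fhat v + ε * (-(min (t m - r) (max (t m - v) 0)))) := by
    intro ε hε hεgap
    have h1 := aux_convex_kink fhat hfconv (t m) ε hε.le
      (hkslope m hm1 le_rfl ε hε hεgap)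
    have h2 := (haffconv r).smul hε.le
    have heq : (fun v => fhat v + ε * (-(min (t m - r) (max (t m - v) 0))))
        = fun v => (fhat v - ε * max (t m - v) 0) + ε * max (r - v) 0 := by
      funext v
      rw [hφdecomp r hrtm.le v]
      ring
    rw [heq]
    exact h1.add (by simpa [smul_eq_mul] using h2)
  -- ====== the two variational inequalities ======
  have ineq2 : (n:ℝ)⁻¹ * ∑ i, min (t m - t k) (max (t m - x i) 0)
      ≤ ∫ y in Ici (0:ℝ), fhat y * min (t m - t k) (max (t m - y) 0) :=
    key _ _ hgapk (hφcont (t k)) (fun v hv => hφzero (t k) htktm v hv) conv2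
  have ineq1 : (∫ y in Ici (0:ℝ), fhat y * min (t m - r) (max (t m - y) 0))
      ≤ (n:ℝ)⁻¹ * ∑ i, min (t m - r) (max (t m - x i) 0) := by
    have h := key (fun v => -(min (t m - r) (max (t m - v) 0))) _ hgapm
      ((hφcont r).neg) (fun v hv => by simp only [hφzero r hrtm.le v hv, neg_zero]) conv1
    have e1 : (∫ y in Ici (0:ℝ), fhat y * -(min (t m - r) (max (t m - y) 0)))
        = - ∫ y in Ici (0:ℝ), fhat y * min (t m - r) (max (t m - y) 0) := by
      rw [← integral_neg]
      exact integral_congr_ae (Filter.Eventually.of_forall fun y => by ring)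
    have e2 : (∑ i, -(min (t m - r) (max (t m - x i) 0)))
        = - ∑ i, min (t m - r) (max (t m - x i) 0) := by
      rw [Finset.sum_neg_distrib]
    rw [e1, e2] at h
    linarith
  -- ====== integral identities ======
  have hIphi : ∀ c : ℝ, 0 ≤ c → c ≤ t m →
      (∫ y in Ici (0:ℝ), fhat y * min (t m - c) (max (t m - y) 0))
        = (t m - c) * (∫ v in (0:ℝ)..c, f0 v) + ∫ u in c..(t m), (t m - u) * f0 u := by
    intro c h0c hctm
    have hint : IntegrableOn (fun y => fhat y * min (t m - c) (max (t m - y) 0)) (Ici 0) :=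
      intmul _ _ hfint (hφcont c) (fun v hv => hφzero c hctm v hv)
    rw [integral_Ici_eq_integral_Ioi]
    have hu1 : Ioc (0:ℝ) c ∪ Ioc c (t m) = Ioc 0 (t m) := Ioc_union_Ioc_eq_Ioc h0c hctm
    have hu2 : Ioc (0:ℝ) (t m) ∪ Ioi (t m) = Ioi 0 := Ioc_union_Ioi_eq_Ioi h0tm.le
    have hi1 : IntegrableOn (fun y => fhat y * min (t m - c) (max (t m - y) 0)) (Ioc 0 c) :=
      hint.mono_set (fun v hv => le_of_lt hv.1)
    have hi2 : IntegrableOn (fun y => fhat y * min (t m - c) (max (t m - y) 0)) (Ioc c (t m)) :=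
      hint.mono_set (fun v hv => le_of_lt (lt_of_le_of_lt h0c hv.1))
    have hi3 : IntegrableOn (fun y => fhat y * min (t m - c) (max (t m - y) 0)) (Ioi (t m)) :=
      hint.mono_set (fun v hv => le_of_lt (lt_of_lt_of_le h0tm (le_of_lt hv)))
    have hi12 : IntegrableOn (fun y => fhat y * min (t m - c) (max (t m - y) 0)) (Ioc 0 (t m)) := by
      rw [← hu1]; exact hi1.union hi2
    have hd1 : Disjoint (Ioc (0:ℝ) (t m)) (Ioi (t m)) := by
      rw [disjoint_left]
      exact fun a ha hb => absurd (mem_Ioi.mp hb) (not_lt.2 (mem_Ioc.mp ha).2)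
    have hd2 : Disjoint (Ioc (0:ℝ) c) (Ioc c (t m)) := by
      rw [disjoint_left]
      exact fun a ha hb => absurd (mem_Ioc.mp hb).1 (not_lt.2 (mem_Ioc.mp ha).2)
    rw [← hu2, setIntegral_union hd1 measurableSet_Ioi hi12 hi3, ← hu1,
      setIntegral_union hd2 measurableSet_Ioc hi1 hi2]
    have e3 : ∫ y in Ioi (t m), fhat y * min (t m - c) (max (t m - y) 0) = 0 := by
      rw [setIntegral_congr_fun measurableSet_Ioi (g := fun _ => (0:ℝ))
        (fun v hv => by
          have : max (t m - v) 0 = 0 := max_eq_right (by simp at hv; linarith)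
          simp [this, min_eq_right (by linarith : (0:ℝ) ≤ t m - c)])]
      simp
    have e1 : ∫ y in Ioc (0:ℝ) c, fhat y * min (t m - c) (max (t m - y) 0)
        = (t m - c) * ∫ v in (0:ℝ)..c, f0 v := by
      rw [setIntegral_congr_fun measurableSet_Ioc (g := fun y => fhat y * (t m - c))
        (fun v hv => by
          have h1 : max (t m - v) 0 = t m - v :=
            max_eq_left (by simp at hv ⊢; linarith [hv.2])
          simp only [h1]
          rw [min_eq_left (by linarith [(mem_Ioc.mp hv).2])])]
      rw [integral_mul_const, intervalIntegral.integral_of_le h0c]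
      rw [setIntegral_congr_fun measurableSet_Ioc (g := fun v => fhat v)
        (fun v hv => hf0eq v (le_of_lt (mem_Ioc.mp hv).1))]
      ring
    have e2 : ∫ y in Ioc c (t m), fhat y * min (t m - c) (max (t m - y) 0)
        = ∫ u in c..(t m), (t m - u) * f0 u := by
      rw [intervalIntegral.integral_of_le hctm]
      exact setIntegral_congr_fun measurableSet_Ioc
        (fun v hv => by
          obtain ⟨hv1, hv2⟩ := mem_Ioc.mp hv
          have h1 : max (t m - v) 0 = t m - v := max_eq_left (by linarith)
          have h2 : f0 v = fhat v := hf0eq v (le_of_lt (lt_of_le_of_lt h0c hv1))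
          simp only [h1, h2]
          rw [min_eq_right (by linarith)]
          ring)
    rw [e1, e2, e3]
    ring
  -- ====== LHS via integration by parts ======
  have hLHS : ∫ u in r..(t k), (∫ v in (0 : ℝ)..u, fhat v)
      = (t k - r) * (∫ v in (0:ℝ)..r, f0 v) + ∫ u in r..(t k), (t k - u) * f0 u := by
    set F : ℝ → ℝ := fun u => ∫ v in (0:ℝ)..u, f0 v with hFdef
    have hF' : ∀ u, HasDerivAt F (f0 u) u := fun u =>
      intervalIntegral.integral_hasDerivAt_right (hf0cont.intervalIntegrable _ _)
        hf0cont.stronglyMeasurable.stronglyMeasurableAtFilter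
        hf0cont.continuousAt
    have hFcont : Continuous F := continuous_iff_continuousAt.2 fun u => (hF' u).continuousAt
    have h1 : ∀ u ∈ uIcc r (t k), (∫ v in (0:ℝ)..u, fhat v) = F u := by
      intro u hu
      rw [uIcc_of_le hrtk.le] at hu
      have hu0 : 0 ≤ u := le_trans hr0 hu.1
      exact intervalIntegral.integral_congr fun v hv => by
        rw [uIcc_of_le hu0] at hv
        exact (hf0eq v hv.1).symm
    rw [intervalIntegral.integral_congr h1]
    have hG : ∀ u ∈ uIcc r (t k),
        HasDerivAt (fun w => (w - t k) * F w) (F u + (u - t k) * f0 u) u := by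
      intro u _
      have := ((hasDerivAt_id' u).sub_const (t k)).mul (hF' u)
      exact this.congr_deriv (by ring)
    have hInt : IntervalIntegrable (fun u => F u + (u - t k) * f0 u) volume r (t k) :=
      (hFcont.add ((continuous_id.sub continuous_const).mul hf0cont)).intervalIntegrable _ _
    have hIBP := intervalIntegral.integral_eq_sub_of_hasDerivAt hG hInt
    have hsplit : ∫ u in r..(t k), (F u + (u - t k) * f0 u)
        = (∫ u in r..(t k), F u) + ∫ u in r..(t k), (u - t k) * f0 u :=
      intervalIntegral.integral_add (hFcont.intervalIntegrable _ _)
        (((continuous_id.sub continuous_const).mul hf0cont).intervalIntegrable _ _)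
    have hneg : ∫ u in r..(t k), (u - t k) * f0 u = - ∫ u in r..(t k), (t k - u) * f0 u := by
      rw [← intervalIntegral.integral_neg]
      exact intervalIntegral.integral_congr fun u _ => by ring
    rw [hsplit, hneg] at hIBP
    have hFr : F r = ∫ v in (0:ℝ)..r, f0 v := rfl
    rw [← hFr]
    linarith [hIBP]
  -- ====== EDF side ======
  have hEDFint : ∫ u in r..(t k), EDF u
      = (n:ℝ)⁻¹ * ∑ i, max (t k - max r (x i)) 0 := by
    have hEDF' : ∀ u : ℝ, EDF u = ∑ i, (n:ℝ)⁻¹ * (if x i ≤ u then (1:ℝ) else 0) := by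
      intro u
      rw [hEDF u, Finset.card_filter, ← Finset.mul_sum]
      push_cast [apply_ite (Nat.cast : ℕ → ℝ)]
      ring
    rw [intervalIntegral.integral_congr (fun u (_ : u ∈ uIcc r (t k)) => hEDF' u)]
    have hmono : ∀ i : Fin n, Monotone (fun u : ℝ => if x i ≤ u then (1:ℝ) else 0) := by
      intro i a b hab
      by_cases h : x i ≤ a
      · simp [h, le_trans h hab]
      · by_cases h2 : x i ≤ b <;> simp [h, h2]
    have hii : ∀ i : Fin n, IntervalIntegrable
        (fun u : ℝ => (n:ℝ)⁻¹ * (if x i ≤ u then (1:ℝ) else 0)) volume r (t k) := by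
      intro i
      exact ((hmono i).intervalIntegrable).const_mul _
    rw [intervalIntegral.integral_finset_sum (fun i _ => hii i), Finset.mul_sum]
    refine Finset.sum_congr rfl fun i _ => ?_
    rw [intervalIntegral.integral_const_mul]
    congr 1
    have hind : (fun u : ℝ => if x i ≤ u then (1:ℝ) else 0)
        = fun u => Set.indicator (Ici (x i)) (fun _ => (1:ℝ)) u := by
      funext u
      simp [Set.indicator_apply, mem_Ici]
    rw [intervalIntegral.integral_of_le hrtk.le, hind,
      setIntegral_indicator measurableSet_Ici]
    rcases le_or_gt (x i) r with h | h
    · have hset : Ioc r (t k) ∩ Ici (x i) = Ioc r (t k) :=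
        inter_eq_left.2 fun u hu => le_trans h (le_of_lt (mem_Ioc.mp hu).1)
      rw [hset]
      simp only [integral_const, smul_eq_mul, mul_one, Measure.restrict_apply_univ]
      rw [measureReal_def, Measure.restrict_apply_univ, Real.volume_Ioc, ENNReal.toReal_ofReal (by linarith)]
      rw [max_eq_left h, max_eq_left (by linarith)]
    · have hset : Ioc r (t k) ∩ Ici (x i) = Icc (x i) (t k) := by
        ext u
        simp only [mem_inter_iff, mem_Ioc, mem_Ici, mem_Icc]
        exact ⟨fun ⟨⟨_, h2⟩, h3⟩ => ⟨h3, h2⟩, fun ⟨h1, h2⟩ => ⟨⟨lt_of_lt_of_le h h1, h2⟩, h1⟩⟩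
      rw [hset]
      simp only [integral_const, smul_eq_mul, mul_one, Measure.restrict_apply_univ]
      rw [measureReal_def, Measure.restrict_apply_univ, Real.volume_Icc, max_eq_right h.le]
      rcases le_or_gt (x i) (t k) with h2 | h2
      · rw [ENNReal.toReal_ofReal (by linarith), max_eq_left (by linarith)]
      · rw [ENNReal.ofReal_of_nonpos (by linarith), max_eq_right (by linarith)]
        simp
  -- ====== combine the integral identities ======
  have hIr := hIphi r hr0 hrtm.le
  have hItk := hIphi (t k) htkpos.le htktm
  have hcont1 : Continuous (fun u : ℝ => (t m - u) * f0 u) :=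
    (continuous_const.sub continuous_id).mul hf0cont
  have hadd1 : (∫ u in r..(t k), (t m - u) * f0 u) + ∫ u in (t k)..(t m), (t m - u) * f0 u
      = ∫ u in r..(t m), (t m - u) * f0 u :=
    intervalIntegral.integral_add_adjacent_intervals (hcont1.intervalIntegrable _ _)
      (hcont1.intervalIntegrable _ _)
  have hadd2 : (∫ v in (0:ℝ)..r, f0 v) + ∫ v in r..(t k), f0 v = ∫ v in (0:ℝ)..(t k), f0 v :=
    intervalIntegral.integral_add_adjacent_intervals (hf0cont.intervalIntegrable _ _)
      (hf0cont.intervalIntegrable _ _)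
  have hlin : ∫ u in r..(t k), (t m - u) * f0 u
      = (∫ u in r..(t k), (t k - u) * f0 u) + (t m - t k) * ∫ u in r..(t k), f0 u := by
    have h1 : ∀ u ∈ uIcc r (t k), (t m - u) * f0 u
        = (t k - u) * f0 u + (t m - t k) * f0 u := fun u _ => by ring
    have ia : IntervalIntegrable (fun u => (t k - u) * f0 u) volume r (t k) :=
      ((continuous_const.sub continuous_id).mul hf0cont).intervalIntegrable _ _
    have ib : IntervalIntegrable (fun u => (t m - t k) * f0 u) volume r (t k) :=
      (continuous_const.mul hf0cont).intervalIntegrable _ _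
    rw [intervalIntegral.integral_congr h1, intervalIntegral.integral_add ia ib,
      intervalIntegral.integral_const_mul]
  have hIdiff : (t k - r) * (∫ v in (0:ℝ)..r, f0 v) + (∫ u in r..(t k), (t k - u) * f0 u)
      = (∫ y in Ici (0:ℝ), fhat y * min (t m - r) (max (t m - y) 0))
        - ∫ y in Ici (0:ℝ), fhat y * min (t m - t k) (max (t m - y) 0) := by
    rw [hIr, hItk]
    linear_combination hadd1 - hlin - (t m - t k) * hadd2
  -- ====== pointwise sum identity ======
  have hpt : ∀ v : ℝ,
      min (t m - r) (max (t m - v) 0) - min (t m - t k) (max (t m - v) 0)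
        = max (t k - max r v) 0 := by
    intro v
    rcases le_total v r with h1 | h1
    · rw [max_eq_left h1, min_eq_left, min_eq_left, max_eq_left (by linarith)]
      · ring
      · rw [max_eq_left (by linarith)]; linarith
      · rw [max_eq_left (by linarith)]; linarith
    · rcases le_total v (t k) with h2 | h2
      · rw [max_eq_right h1, max_eq_left (by linarith : (0:ℝ) ≤ t m - v),
          min_eq_right (by linarith), min_eq_left (by linarith), max_eq_left (by linarith)]
        ring
      · rcases le_total v (t m) with h3 | h3
        · rw [max_eq_right h1, max_eq_left (by linarith : (0:ℝ) ≤ t m - v),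
            min_eq_right (by linarith), min_eq_right (by linarith),
            max_eq_right (by linarith)]
          ring
        · rw [max_eq_right h1, max_eq_right (by linarith : t m - v ≤ 0),
            min_eq_right (by linarith), min_eq_right (by linarith),
            max_eq_right (by linarith)]
          ring
  have hsum : (∑ i, min (t m - r) (max (t m - x i) 0))
      - (∑ i, min (t m - t k) (max (t m - x i) 0))
      = ∑ i, max (t k - max r (x i)) 0 := by
    rw [← Finset.sum_sub_distrib]
    exact Finset.sum_congr rfl fun i _ => hpt (x i)
  -- ====== conclusion ======
  rw [hLHS, hEDFint]
  have final : (t k - r) * (∫ v in (0:ℝ)..r, f0 v) + (∫ u in r..(t k), (t k - u) * f0 u)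
      ≤ (n:ℝ)⁻¹ * ((∑ i, min (t m - r) (max (t m - x i) 0))
          - ∑ i, min (t m - t k) (max (t m - x i) 0)) := by
    rw [hIdiff, mul_sub]
    exact sub_le_sub ineq1 ineq2
  rw [hsum] at final
  exact final
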